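/- Let T be a tree on n vertices with Laplacian matrix L and degree vector d, and set z = d − 𝟙. Define the q-Laplacian 𝓛 = qL − (q−1)I + q(q−1)diag(z). Then for any nonzero q with q ≠ ±1, the exponential distance matrix 𝓕 of T satisfies 𝓕⁻¹ = (1/(1−q²)) 𝓛. -/

import Mathlib

open SimpleGraph Finset

/-- In a tree, for `u ≠ v`, no neighbor of `v` has the same distance to `u` as `v`. -/
lemma tree_nbr_dist_ne {V : Type*} [DecidableEq V] {G : SimpleGraph V} (hG : G.IsTree) {u v w : V}
    (h : G.Adj v w) : G.dist u w ≠ G.dist u v := by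
  intro heq
  have hc := hG.isConnected
  obtain ⟨p, hp⟩ := hc.exists_walk_length_eq_dist w u
  have hpPath : p.IsPath := p.isPath_of_length_eq_dist hp
  have hv : v ∉ p.support := by
    intro hv
    have h1 : G.dist w v ≤ (p.takeUntil v hv).length := SimpleGraph.dist_le _
    have h2 : G.dist v u ≤ (p.dropUntil v hv).length := SimpleGraph.dist_le _
    have h3 : (p.takeUntil v hv).length + (p.dropUntil v hv).length = p.length := by
      rw [← SimpleGraph.Walk.length_append, p.take_spec hv]
    have hwv : G.dist w v = 1 := SimpleGraph.dist_eq_one_iff_adj.mpr h.symm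
    have : G.dist w v + G.dist v u ≤ p.length := by omega
    have c1 : G.dist w u = G.dist u w := SimpleGraph.dist_comm
    have c2 : G.dist v u = G.dist u v := SimpleGraph.dist_comm
    omega
  have hcons : (SimpleGraph.Walk.cons h p).IsPath := by
    rw [SimpleGraph.Walk.cons_isPath_iff]; exact ⟨hpPath, hv⟩
  obtain ⟨r, hr⟩ := hc.exists_walk_length_eq_dist v u
  have hrPath : r.IsPath := r.isPath_of_length_eq_dist hr
  have := (hG.existsUnique_path v u).unique hcons hrPath
  have hlen : (SimpleGraph.Walk.cons h p).length = r.length := by rw [this]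
  rw [SimpleGraph.Walk.length_cons, hp, hr] at hlen
  have c1 : G.dist w u = G.dist u w := SimpleGraph.dist_comm
  have c2 : G.dist v u = G.dist u v := SimpleGraph.dist_comm
  omega

/-- In a tree, the neighbor of `v` closer to `u` is unique. -/
lemma tree_nbr_pred_unique {V : Type*} [DecidableEq V] {G : SimpleGraph V} (hG : G.IsTree) {u v w₁ w₂ : V}
    (h₁ : G.Adj v w₁) (h₂ : G.Adj v w₂)
    (hd₁ : G.dist u w₁ + 1 = G.dist u v) (hd₂ : G.dist u w₂ + 1 = G.dist u v) :
    w₁ = w₂ := by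
  have hc := hG.isConnected
  obtain ⟨p₁, hp₁⟩ := hc.exists_walk_length_eq_dist w₁ u
  obtain ⟨p₂, hp₂⟩ := hc.exists_walk_length_eq_dist w₂ u
  have hl₁ : (SimpleGraph.Walk.cons h₁ p₁).length = G.dist v u := by
    have c1 : G.dist w₁ u = G.dist u w₁ := SimpleGraph.dist_comm
    have c2 : G.dist v u = G.dist u v := SimpleGraph.dist_comm
    rw [SimpleGraph.Walk.length_cons, hp₁]; omega
  have hl₂ : (SimpleGraph.Walk.cons h₂ p₂).length = G.dist v u := by
    have c1 : G.dist w₂ u = G.dist u w₂ := SimpleGraph.dist_comm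
    have c2 : G.dist v u = G.dist u v := SimpleGraph.dist_comm
    rw [SimpleGraph.Walk.length_cons, hp₂]; omega
  have hP₁ : (SimpleGraph.Walk.cons h₁ p₁).IsPath := Walk.isPath_of_length_eq_dist _ hl₁
  have hP₂ : (SimpleGraph.Walk.cons h₂ p₂).IsPath := Walk.isPath_of_length_eq_dist _ hl₂
  have heq := (hG.existsUnique_path v u).unique hP₁ hP₂
  have := congrArg (fun z => z.getVert 1) heq
  simpa [SimpleGraph.Walk.getVert_cons] using this

/-- In a tree, for `u ≠ v`, there is exactly one neighbor of `v` at distance `d-1` from `u`,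
and all other neighbors are at distance `d+1`. -/
lemma tree_exists_pred {V : Type*} [DecidableEq V] {G : SimpleGraph V} (hG : G.IsTree) {u v : V} (huv : u ≠ v) :
    ∃ w₀, G.Adj v w₀ ∧ G.dist u w₀ + 1 = G.dist u v ∧
      ∀ w, G.Adj v w → w ≠ w₀ → G.dist u w = G.dist u v + 1 := by
  have hc := hG.isConnected
  obtain ⟨r, hr⟩ := hc.exists_walk_length_eq_dist v u
  have hvu : v ≠ u := huv.symm
  obtain ⟨w₀, h, q, rfl⟩ := SimpleGraph.Walk.exists_eq_cons_of_ne hvu r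
  have hq : G.dist w₀ u ≤ q.length := SimpleGraph.dist_le q
  have hlen : q.length + 1 = G.dist v u := by
    rw [← hr, SimpleGraph.Walk.length_cons]
  have htri : G.dist v u ≤ 1 + G.dist w₀ u := by
    have := hc.dist_triangle (u := v) (v := w₀) (w := u)
    have h1 : G.dist v w₀ = 1 := SimpleGraph.dist_eq_one_iff_adj.mpr h
    omega
  have hw₀ : G.dist u w₀ + 1 = G.dist u v := by
    have c1 : G.dist w₀ u = G.dist u w₀ := SimpleGraph.dist_comm
    have c2 : G.dist v u = G.dist u v := SimpleGraph.dist_comm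
    omega
  refine ⟨w₀, h, hw₀, fun w hw hne => ?_⟩
  have hne' : G.dist u w ≠ G.dist u v := tree_nbr_dist_ne hG hw
  have hb1 : G.dist u v ≤ G.dist u w + 1 := by
    have := hc.dist_triangle (u := u) (v := w) (w := v)
    have h1 : G.dist w v = 1 := SimpleGraph.dist_eq_one_iff_adj.mpr hw.symm
    omega
  have hb2 : G.dist u w ≤ G.dist u v + 1 := by
    have := hc.dist_triangle (u := u) (v := v) (w := w)
    have h1 : G.dist v w = 1 := SimpleGraph.dist_eq_one_iff_adj.mpr hw
    omega
  have hnp : G.dist u w + 1 ≠ G.dist u v := by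
    intro hcon
    exact hne (tree_nbr_pred_unique hG hw h hcon hw₀)
  omega

/-- Sum of `q ^ dist u w` over the neighbors `w` of `v`, for `u ≠ v` in a tree. -/
lemma tree_nbr_sum {V : Type*} [Fintype V] [DecidableEq V] {G : SimpleGraph V}
    [DecidableRel G.Adj] (hG : G.IsTree) {u v : V} (huv : u ≠ v) (q : ℝ) :
    ∑ w ∈ G.neighborFinset v, q ^ G.dist u w
      = q ^ (G.dist u v - 1) + ((G.degree v : ℝ) - 1) * q ^ (G.dist u v + 1) := by
  obtain ⟨w₀, hadj, hd, hrest⟩ := tree_exists_pred hG huv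
  have hmem : w₀ ∈ G.neighborFinset v := (G.mem_neighborFinset v w₀).mpr hadj
  rw [← Finset.add_sum_erase _ _ hmem]
  have h1 : G.dist u w₀ = G.dist u v - 1 := by omega
  have h2 : ∑ w ∈ (G.neighborFinset v).erase w₀, q ^ G.dist u w
      = ∑ w ∈ (G.neighborFinset v).erase w₀, q ^ (G.dist u v + 1) := by
    refine Finset.sum_congr rfl fun w hwmem => ?_
    obtain ⟨hne, hmem'⟩ := Finset.mem_erase.mp hwmem
    rw [hrest w ((G.mem_neighborFinset v w).mp hmem') hne]
  rw [h1, h2, Finset.sum_const, Finset.card_erase_of_mem hmem, G.card_neighborFinset_eq_degree,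
    nsmul_eq_mul]
  congr 1
  have hdeg : 1 ≤ G.degree v := by
    rw [← G.card_neighborFinset_eq_degree]
    exact Finset.card_pos.mpr ⟨w₀, hmem⟩
  push_cast [hdeg]
  ring

/-- The exponential distance matrix of a connected graph `G`:
the `(u,v)` entry is `q ^ d(u,v)`. -/
noncomputable def expDistMatrix {V : Type*} (G : SimpleGraph V) (q : ℝ) : Matrix V V ℝ :=
  Matrix.of fun u v => q ^ (G.dist u v)

/-- The exponential distance matrix of a tree times the `q`-Laplacian is `(1-q²)·I`. -/
lemma expDistMatrix_mul_qLaplacian {V : Type*} [Fintype V] [DecidableEq V]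
    {G : SimpleGraph V} [DecidableRel G.Adj] (hG : G.IsTree) (q : ℝ) :
    expDistMatrix G q *
        (q • G.lapMatrix ℝ - (q - 1) • (1 : Matrix V V ℝ)
          + (q * (q - 1)) • Matrix.diagonal (fun v => (G.degree v : ℝ) - 1))
      = (1 - q ^ 2) • (1 : Matrix V V ℝ) := by
  ext u v
  rw [Matrix.mul_apply]
  have step : ∀ w : V,
      expDistMatrix G q u w *
        (q • G.lapMatrix ℝ - (q - 1) • (1 : Matrix V V ℝ)
          + (q * (q - 1)) • Matrix.diagonal (fun v => (G.degree v : ℝ) - 1)) w v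
      = (if w = v then q ^ G.dist u v * (q ^ 2 * (G.degree v : ℝ) + 1 - q ^ 2) else 0)
        - (if w ∈ G.neighborFinset v then q * q ^ G.dist u w else 0) := by
    intro w
    simp only [expDistMatrix, Matrix.of_apply, Matrix.add_apply, Matrix.sub_apply,
      Matrix.smul_apply, SimpleGraph.lapMatrix, SimpleGraph.degMatrix,
      Matrix.diagonal_apply, Matrix.one_apply, SimpleGraph.adjMatrix_apply,
      SimpleGraph.mem_neighborFinset, smul_eq_mul]
    by_cases hwv : w = v
    · subst hwv
      simp only [if_pos rfl, G.irrefl, if_false, if_true]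
      ring
    · simp only [if_neg hwv]
      have : G.Adj w v ↔ G.Adj v w := G.adj_comm w v
      by_cases hadj : G.Adj v w
      · rw [if_pos (this.mpr hadj), if_pos hadj]; ring
      · rw [if_neg (fun hh => hadj (this.mp hh)), if_neg hadj]; ring
  rw [Finset.sum_congr rfl (fun w _ => step w), Finset.sum_sub_distrib,
    Finset.sum_ite_eq' Finset.univ v, if_pos (Finset.mem_univ v),
    Finset.sum_ite_mem, Finset.univ_inter]
  rw [Matrix.smul_apply, Matrix.one_apply, smul_eq_mul]
  by_cases huv : u = v
  · subst huv
    have hsum : ∑ w ∈ G.neighborFinset u, q * q ^ G.dist u w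
        = (G.degree u : ℝ) * q ^ 2 := by
      have : ∀ w ∈ G.neighborFinset u, q * q ^ G.dist u w = q ^ 2 := by
        intro w hw
        rw [SimpleGraph.dist_eq_one_iff_adj.mpr ((G.mem_neighborFinset u w).mp hw)]
        ring
      rw [Finset.sum_congr rfl this, Finset.sum_const, G.card_neighborFinset_eq_degree,
        nsmul_eq_mul]
    rw [hsum, SimpleGraph.dist_self, if_pos rfl]
    ring
  · have hsum : ∑ w ∈ G.neighborFinset v, q * q ^ G.dist u w
        = q * (q ^ (G.dist u v - 1) + ((G.degree v : ℝ) - 1) * q ^ (G.dist u v + 1)) := by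
      rw [← Finset.mul_sum, tree_nbr_sum hG huv q]
    rw [hsum, if_neg huv]
    obtain ⟨k, hk⟩ : ∃ k, G.dist u v = k + 1 := by
      have := hG.isConnected.pos_dist_of_ne huv
      exact ⟨G.dist u v - 1, by omega⟩
    rw [hk]
    simp only [Nat.add_sub_cancel]
    rw [pow_succ, pow_succ, pow_succ]
    ring

/-- For a tree `T` with Laplacian `L` and `z = d - 𝟙` (degrees minus one), setting
`𝓛 = qL - (q-1)I + q(q-1)diag(z)`, one has `𝓕⁻¹ = (1/(1-q²)) 𝓛`. -/
theorem inv_expDistMatrix_tree_eq_qLaplacian {V : Type*} [Fintype V] [DecidableEq V]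
    (G : SimpleGraph V) [DecidableRel G.Adj] (hG : G.IsTree)
    (q : ℝ) (hq0 : q ≠ 0) (hq1 : q ≠ 1) (hq1' : q ≠ -1) :
    (expDistMatrix G q)⁻¹
      = (1 / (1 - q ^ 2)) •
          (q • G.lapMatrix ℝ - (q - 1) • (1 : Matrix V V ℝ)
            + (q * (q - 1)) • Matrix.diagonal (fun v => (G.degree v : ℝ) - 1)) := by
  have hq2 : (1 : ℝ) - q ^ 2 ≠ 0 := by
    intro h
    have : (1 - q) * (1 + q) = 0 := by ring_nf; linarith [h]
    rcases mul_eq_zero.mp this with h' | h'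
    · exact hq1 (by linarith)
    · exact hq1' (by linarith)
  apply Matrix.inv_eq_right_inv
  rw [Matrix.mul_smul, expDistMatrix_mul_qLaplacian hG q, smul_smul]
  rw [one_div, inv_mul_cancel₀ hq2, one_smul]
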